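/- For every alphabet size σ ≥ 2 and every i ≥ 1, the number of unbordered strings satisfies b(i+1, σ) ≤ σ · b(i, σ); equivalently, the sequence b(i, σ)/σ^i is monotonically nonincreasing in i. -/

import Mathlib

open List Finset Filter

/-- `S` is unbordered: it has no nonempty proper prefix that is also a suffix. -/
def Unbordered {α : Type*} (S : List α) : Prop :=
  ∀ B : List α, B ≠ [] → B.length < S.length → B <+: S → ¬ B <:+ S

/-- The length of the maximal unbordered factor of `S`. -/
noncomputable def muf {α : Type*} (S : List α) : ℕ :=
  sSup {k | ∃ F : List α, F <:+: S ∧ Unbordered F ∧ F.length = k}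


/-- `unbCount σ i` : the number of unbordered strings of length `i` over an alphabet
of size `σ`. -/
noncomputable def unbCount (σ i : ℕ) : ℕ :=
  Nat.card {f : Fin i → Fin σ // Unbordered (List.ofFn f)}

section Aux

variable {α : Type*}

/-- `k` is the length of a border of `w`. -/
def Brd (w : List α) (k : ℕ) : Prop := 0 < k ∧ k < w.length ∧ w.take k <:+ w

lemma suffix_of_suffix_length_le' {l₁ l₂ l₃ : List α} (h₁ : l₁ <:+ l₃) (h₂ : l₂ <:+ l₃)
    (h : l₁.length ≤ l₂.length) : l₁ <:+ l₂ := by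
  rw [← List.reverse_prefix] at h₁ h₂ ⊢
  exact List.prefix_of_prefix_length_le h₁ h₂ (by simpa using h)

lemma not_unbordered_iff {w : List α} : ¬ Unbordered w ↔ ∃ k, Brd w k := by
  constructor
  · intro h
    rw [Unbordered] at h
    push_neg at h
    obtain ⟨B, hB0, hBlt, hBp, hBs⟩ := h
    refine ⟨B.length, List.length_pos_iff.mpr hB0, hBlt, ?_⟩
    rwa [← List.prefix_iff_eq_take.mp hBp]
  · rintro ⟨k, hk0, hklt, hks⟩ h
    exact h (w.take k) (List.ne_nil_of_length_pos (by simp [List.length_take]; omega))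
      (by simp [List.length_take]; omega) (w.take_prefix k) hks

lemma brd_take_eq {w : List α} {k : ℕ} (hk : k ≤ w.length) {m : ℕ} (hm : m ≤ k) :
    (w.take k).take m = w.take m := by
  rw [List.take_take, min_eq_left hm]

/-- An unbordered border has length at most half the word length. -/
lemma two_mul_length_le {u w : List α} (hu0 : u ≠ []) (hup : u <+: w) (hus : u <:+ w)
    (hult : u.length < w.length) (hunb : Unbordered u) : 2 * u.length ≤ w.length := by
  by_contra hcon
  push_neg at hcon
  obtain ⟨t, ht⟩ := hus
  have htl : t.length + u.length = w.length := by
    have := congrArg List.length ht; simpa using this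
  have htlt : t.length < u.length := by omega
  have ht0 : t ≠ [] := by
    intro h; subst h; simp at ht; subst ht; omega
  have hu : u = t ++ u.take (u.length - t.length) := by
    have h1 : u = w.take u.length := List.prefix_iff_eq_take.mp hup
    conv_lhs => rw [h1, ← ht]
    rw [List.take_append]
    congr 1
    rw [List.take_of_length_le (le_of_lt htlt)]
  refine hunb (u.take (u.length - t.length)) ?_ ?_ (u.take_prefix _) ⟨t, hu.symm⟩
  · apply List.ne_nil_of_length_pos
    simp [List.length_take]
    omega
  · have h0t : 0 < t.length := List.length_pos_iff.mpr ht0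
    simp [List.length_take]
    omega

/-- length of shortest border. -/
noncomputable def sb (w : List α) : ℕ := sInf {k | Brd w k}

variable {w : List α}

lemma sb_brd (h : ¬ Unbordered w) : Brd w (sb w) :=
  Nat.sInf_mem (not_unbordered_iff.mp h)

lemma sb_le {k : ℕ} (hk : Brd w k) : sb w ≤ k := Nat.sInf_le hk

lemma sb_unbordered (h : ¬ Unbordered w) : Unbordered (w.take (sb w)) := by
  obtain ⟨h0, hlt, hs⟩ := sb_brd h
  intro B hB0 hBlt hBp hBs
  have hBw : B <+: w := hBp.trans (w.take_prefix _)
  have hBsw : B <:+ w := hBs.trans hs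
  have hBlen : B.length < sb w := by
    have : (w.take (sb w)).length = sb w := by simp [List.length_take]; omega
    omega
  have : Brd w B.length := by
    refine ⟨List.length_pos_iff.mpr hB0, by omega, ?_⟩
    rwa [← List.prefix_iff_eq_take.mp hBw]
  have := sb_le this
  omega

lemma sb_two_mul (h : ¬ Unbordered w) : 2 * sb w ≤ w.length := by
  obtain ⟨h0, hlt, hs⟩ := sb_brd h
  have hlen : (w.take (sb w)).length = sb w := by simp [List.length_take]; omega
  have := two_mul_length_le (u := w.take (sb w)) (w := w)
    (by intro hc; rw [hc] at hlen; simp at hlen; omega)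
    (w.take_prefix _) hs (by omega) (sb_unbordered h)
  omega

/-- the extended word -/
def extw (c : α) (w : List α) (k : ℕ) : List α := w.take k ++ c :: w.drop k

lemma extw_length {c : α} {k : ℕ} (hk : k ≤ w.length) :
    (extw c w k).length = w.length + 1 := by
  simp [extw, List.length_take, List.length_drop]; omega

lemma sb_ext (h : ¬ Unbordered w) (c : α) :
    ¬ Unbordered (extw c w (sb w)) ∧ sb (extw c w (sb w)) = sb w := by
  obtain ⟨h0, hlt, hs⟩ := sb_brd h
  set k := sb w with hk
  set u := w.take k with hu
  have hul : u.length = k := by simp [hu, List.length_take]; omega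
  have h2k : 2 * k ≤ w.length := sb_two_mul h
  have hdl : (w.drop k).length = w.length - k := by simp
  -- u is a suffix of drop k w
  have husd : u <:+ w.drop k :=
    suffix_of_suffix_length_le' hs (w.drop_suffix k) (by omega)
  set w₁ := extw c w k with hw₁
  have hw₁l : w₁.length = w.length + 1 := extw_length (by omega)
  have htk : w₁.take k = u := by
    rw [hw₁, extw, List.take_append]
    simp [hul, min_eq_left (le_of_lt hlt), u]
  have hbrdk : Brd w₁ k := by
    refine ⟨h0, by omega, ?_⟩
    rw [htk]
    exact husd.trans ((List.suffix_cons c _).trans ⟨u, rfl⟩)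
  have hnb : ¬ Unbordered w₁ := not_unbordered_iff.mpr ⟨k, hbrdk⟩
  refine ⟨hnb, le_antisymm (sb_le hbrdk) ?_⟩
  -- shortest border of w₁ is a border of w
  set m := sb w₁ with hm
  obtain ⟨hm0, hmlt, hms⟩ := sb_brd hnb
  have hmk : m ≤ k := sb_le hbrdk
  have htm : w₁.take m = w.take m := by
    have h1 : w₁.take m = (w₁.take k).take m := by rw [List.take_take, min_eq_left hmk]
    rw [h1, htk, hu, List.take_take, min_eq_left hmk]
  have : Brd w m := by
    refine ⟨hm0, by omega, ?_⟩
    have : w₁.take m <:+ w.drop k := by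
      refine suffix_of_suffix_length_le' hms ⟨u ++ [c], ?_⟩ ?_
      · rw [hw₁, extw, List.append_assoc]; rfl
      · simp [List.length_take]; omega
    rw [htm] at this
    exact this.trans (w.drop_suffix k)
  exact sb_le this

end Aux

section Count

variable {σ : ℕ}

lemma extw_take {α : Type*} {w : List α} {c : α} {k : ℕ} (hk : k ≤ w.length) :
    (extw c w k).take k = w.take k := by
  rw [extw, List.take_append]
  simp [List.length_take, min_eq_left hk]

lemma extw_drop {α : Type*} {w : List α} {c : α} {k : ℕ} (hk : k ≤ w.length) :
    (extw c w k).drop k = c :: w.drop k := by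
  rw [extw, List.drop_append]
  simp [List.length_take, min_eq_left hk]

/-- bridge: functions ↔ lists of fixed length -/
noncomputable def funListEquiv (n : ℕ) (P : List (Fin σ) → Prop) :
    {f : Fin n → Fin σ // P (List.ofFn f)} ≃ {w : List (Fin σ) // w.length = n ∧ P w} where
  toFun f := ⟨List.ofFn f.1, by simp, f.2⟩
  invFun w := ⟨fun j => w.1.get (Fin.cast w.2.1.symm j), by
    have : List.ofFn (fun j : Fin n => w.1.get (Fin.cast w.2.1.symm j)) = w.1 := by
      apply List.ext_getElem (by simp [w.2.1])
      intro i h1 h2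
      simp
    rw [this]; exact w.2.2⟩
  left_inv f := by
    apply Subtype.ext
    funext j
    simp
  right_inv w := by
    apply Subtype.ext
    apply List.ext_getElem (by simp [w.2.1])
    intro i h1 h2
    simp

instance listSubFinite (n : ℕ) (P : List (Fin σ) → Prop) :
    Finite {w : List (Fin σ) // w.length = n ∧ P w} :=
  Finite.of_equiv _ (funListEquiv n P)

lemma card_split (n : ℕ) :
    unbCount σ n
      + Nat.card {w : List (Fin σ) // w.length = n ∧ ¬ Unbordered w} = σ ^ n := by
  classical
  rw [unbCount,
    Nat.card_congr (funListEquiv n (fun w => ¬ Unbordered w)).symm,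
    ← Nat.card_sum,
    Nat.card_congr (Equiv.sumCompl (fun f : Fin n → Fin σ => Unbordered (List.ofFn f)))]
  simp [Nat.card_fun, Nat.card_eq_fintype_card]

lemma card_bord_le (i : ℕ) :
    σ * Nat.card {w : List (Fin σ) // w.length = i ∧ ¬ Unbordered w}
      ≤ Nat.card {w : List (Fin σ) // w.length = i + 1 ∧ ¬ Unbordered w} := by
  classical
  have hcard : σ * Nat.card {w : List (Fin σ) // w.length = i ∧ ¬ Unbordered w}
      = Nat.card (Fin σ × {w : List (Fin σ) // w.length = i ∧ ¬ Unbordered w}) := by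
    rw [Nat.card_prod]
    simp [Nat.card_eq_fintype_card]
  rw [hcard]
  have hle : ∀ (w : List (Fin σ)), w.length = i → ¬ Unbordered w → sb w ≤ w.length := by
    intro w _ hw
    exact le_of_lt (sb_brd hw).2.1
  refine Nat.card_le_card_of_injective
    (fun p => ⟨extw p.1 p.2.1 (sb p.2.1), ?_, ?_⟩) ?_
  · rw [extw_length (hle p.2.1 p.2.2.1 p.2.2.2), p.2.2.1]
  · exact (sb_ext p.2.2.2 p.1).1
  · rintro ⟨c, w, hwl, hwb⟩ ⟨c', w', hwl', hwb'⟩ heq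
    simp only [Subtype.mk.injEq] at heq
    have hk : sb w = sb w' := by
      have h1 := (sb_ext hwb c).2
      have h2 := (sb_ext hwb' c').2
      rw [heq] at h1
      rw [h2] at h1
      exact h1.symm
    have hdrop : c :: w.drop (sb w) = c' :: w'.drop (sb w) := by
      rw [← extw_drop (hle w hwl hwb), heq, hk, extw_drop (hle w' hwl' hwb'), ← hk]
    have htake : w.take (sb w) = w'.take (sb w) := by
      rw [← extw_take (hle w hwl hwb), heq, hk, extw_take (hle w' hwl' hwb'), ← hk]
    have hc : c = c' := by injection hdrop
    have hw : w = w' := by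
      have hd : w.drop (sb w) = w'.drop (sb w) := by injection hdrop
      rw [← List.take_append_drop (sb w) w, htake, hd, List.take_append_drop]
    subst hc; subst hw
    rfl

end Count

theorem unbCount_ratio_antitone (σ i : ℕ) (hσ : 2 ≤ σ) (hi : 1 ≤ i) :
    unbCount σ (i + 1) ≤ σ * unbCount σ i := by
  have h0 := card_split (σ := σ) i
  have h1 := card_split (σ := σ) (i + 1)
  have hb := card_bord_le (σ := σ) i
  have hpow : (σ : ℕ) ^ (i + 1) = σ * σ ^ i := by ring
  rw [hpow, ← h0, Nat.mul_add] at h1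
  omega
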